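/- Let A be an associative ring with unit and n ≥ 2. Then the matrix ring Mat_n(A) is a UA-ring: every multiplication-preserving bijection from Mat_n(A) to any associative ring S is additive. -/

import Mathlib

theorem stmt_12 (A : Type*) [Ring A] (n : ℕ) (hn : 2 ≤ n)
    (S : Type*) [NonUnitalRing S] (α : Matrix (Fin n) (Fin n) A → S)
    (hbij : Function.Bijective α) (hmul : ∀ x y, α (x * y) = α x * α y) :
    ∀ x y, α (x + y) = α x + α y := by
  obtain ⟨op, hop⟩ : ∃ op : Matrix (Fin n) (Fin n) A → Matrix (Fin n) (Fin n) A →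
      Matrix (Fin n) (Fin n) A, ∀ x y, α (op x y) = α x + α y :=
    ⟨fun x y => Function.surjInv hbij.2 (α x + α y),
     fun x y => Function.surjInv_eq hbij.2 _⟩
  have hinj : Function.Injective α := hbij.1
  have distl : ∀ z x y, z * op x y = op (z * x) (z * y) := by
    intro z x y; apply hinj; simp only [hmul, hop, mul_add]
  have distr : ∀ z x y, op x y * z = op (x * z) (y * z) := by
    intro z x y; apply hinj; simp only [hmul, hop, add_mul]
  have h00 : op 0 0 = 0 := by
    have h := distl 0 0 0
    simpa using h.symm
  have hα0 : α 0 = 0 := by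
    have h := hop 0 0
    rw [h00] at h
    exact (left_eq_add.mp h)
  have hx0 : ∀ x, op x 0 = x := fun x => hinj (by rw [hop, hα0, add_zero])
  have h0x : ∀ x, op 0 x = x := fun x => hinj (by rw [hop, hα0, zero_add])
  have hcomm : ∀ x y, op x y = op y x := fun x y => hinj (by rw [hop, hop, add_comm])
  haveI : NeZero n := ⟨by omega⟩
  set i0 : Fin n := ⟨0, by omega⟩ with hi0
  set i1 : Fin n := ⟨1, by omega⟩ with hi1
  have hne : i1 ≠ i0 := by simp [hi0, hi1, Fin.ext_iff]
  set e : Matrix (Fin n) (Fin n) A := Matrix.single i0 i0 1 with he_def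
  obtain ⟨f, hf_def⟩ : ∃ f : Matrix (Fin n) (Fin n) A, f = 1 - e := ⟨_, rfl⟩
  have hee : e * e = e := by rw [he_def]; simp
  have hef : e * f = 0 := by rw [hf_def, mul_sub, mul_one, hee, sub_self]
  have hfe : f * e = 0 := by rw [hf_def, sub_mul, one_mul, hee, sub_self]
  have hff : f * f = f := by
    rw [hf_def, sub_mul, one_mul, mul_sub, mul_one, hee, sub_self, sub_zero]
  have hee' : ∀ x, e * (e * x) = e * x := fun x => by rw [← mul_assoc, hee]
  have hff' : ∀ x, f * (f * x) = f * x := fun x => by rw [← mul_assoc, hff]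
  have hef' : ∀ x, e * (f * x) = 0 := fun x => by rw [← mul_assoc, hef, zero_mul]
  have hfe' : ∀ x, f * (e * x) = 0 := fun x => by rw [← mul_assoc, hfe, zero_mul]
  have hM : ∀ u, e * u * e + e * u * f + f * u * e + f * u * f = u := by
    intro u; rw [hf_def]; noncomm_ring
  have hC : ∀ x y, op x y =
      op (e*x*e) (e*y*e) + op (e*x*f) (e*y*f) + op (f*x*e) (f*y*e) + op (f*x*f) (f*y*f) := by
    intro x y
    conv_lhs => rw [← hM (op x y)]
    simp only [distl, distr]
  -- corner vanishing lemmas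
  have crn12 : ∀ a, e*a*f = a → e*a*e = 0 ∧ f*a*e = 0 ∧ f*a*f = 0 := by
    intro a h
    refine ⟨?_, ?_, ?_⟩ <;> (rw [← h]; simp only [mul_assoc, hee, hef, hfe, hff, hee', hef',
      hfe', hff', mul_zero, zero_mul, mul_one, one_mul])
  have crn21 : ∀ a, f*a*e = a → e*a*e = 0 ∧ e*a*f = 0 ∧ f*a*f = 0 := by
    intro a h
    refine ⟨?_, ?_, ?_⟩ <;> (rw [← h]; simp only [mul_assoc, hee, hef, hfe, hff, hee', hef',
      hfe', hff', mul_zero, zero_mul, mul_one, one_mul])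
  -- one-sided absorption lemmas
  have lr11 : ∀ a, e*a*e = a → e*a = a ∧ a*e = a := by
    intro a h
    constructor <;> (rw [← h]; simp only [mul_assoc, hee, hef, hfe, hff, hee', hef',
      hfe', hff', mul_zero, zero_mul, mul_one, one_mul])
  have lr12 : ∀ a, e*a*f = a → e*a = a ∧ a*f = a ∧ a*e = 0 ∧ f*a = 0 := by
    intro a h
    refine ⟨?_, ?_, ?_, ?_⟩ <;> (rw [← h]; simp only [mul_assoc, hee, hef, hfe, hff, hee', hef',
      hfe', hff', mul_zero, zero_mul, mul_one, one_mul])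
  have lr21 : ∀ a, f*a*e = a → f*a = a ∧ a*e = a ∧ a*f = 0 ∧ e*a = 0 := by
    intro a h
    refine ⟨?_, ?_, ?_, ?_⟩ <;> (rw [← h]; simp only [mul_assoc, hee, hef, hfe, hff, hee', hef',
      hfe', hff', mul_zero, zero_mul, mul_one, one_mul])
  have lr22 : ∀ a, f*a*f = a → f*a = a ∧ a*f = a ∧ e*a = 0 ∧ a*e = 0 := by
    intro a h
    refine ⟨?_, ?_, ?_, ?_⟩ <;> (rw [← h]; simp only [mul_assoc, hee, hef, hfe, hff, hee', hef',
      hfe', hff', mul_zero, zero_mul, mul_one, one_mul])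
  -- corners of e and f themselves
  have ce : e*e*e = e ∧ e*e*f = 0 ∧ f*e*e = 0 ∧ f*e*f = 0 := by
    refine ⟨?_, ?_, ?_, ?_⟩ <;> simp only [mul_assoc, hee, hef, hfe, hff, hee', hef',
      hfe', hff', mul_zero, zero_mul, mul_one, one_mul]
  have cf : e*f*e = 0 ∧ e*f*f = 0 ∧ f*f*e = 0 ∧ f*f*f = f := by
    refine ⟨?_, ?_, ?_, ?_⟩ <;> simp only [mul_assoc, hee, hef, hfe, hff, hee', hef',
      hfe', hff', mul_zero, zero_mul, mul_one, one_mul]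
  -- mixed additivity
  have m_ea : ∀ a, e*a*f = a → op e a = e + a := by
    intro a ha
    obtain ⟨c1, c2, c3⟩ := crn12 a ha
    rw [hC e a, ce.1, ce.2.1, ce.2.2.1, ce.2.2.2, c1, c2, c3, ha]
    simp only [hx0, h0x, h00, add_zero, zero_add]
  have m_bf : ∀ b, e*b*f = b → op b f = b + f := by
    intro b hb
    obtain ⟨c1, c2, c3⟩ := crn12 b hb
    rw [hC b f, cf.1, cf.2.1, cf.2.2.1, cf.2.2.2, c1, c2, c3, hb]
    simp only [hx0, h0x, h00, add_zero, zero_add]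
  have m_fa : ∀ a, f*a*e = a → op f a = f + a := by
    intro a ha
    obtain ⟨c1, c2, c3⟩ := crn21 a ha
    rw [hC f a, cf.1, cf.2.1, cf.2.2.1, cf.2.2.2, c1, c2, c3, ha]
    simp only [hx0, h0x, h00, add_zero, zero_add]
    rw [add_comm]
  have m_eb : ∀ b, f*b*e = b → op e b = e + b := by
    intro b hb
    obtain ⟨c1, c2, c3⟩ := crn21 b hb
    rw [hC e b, ce.1, ce.2.1, ce.2.2.1, ce.2.2.2, c1, c2, c3, hb]
    simp only [hx0, h0x, h00, add_zero, zero_add]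
  -- same-corner additivity: (1,2)
  have c12 : ∀ a b, e*a*f = a → e*b*f = b → op a b = a + b := by
    intro a b ha hb
    obtain ⟨hea, haf, hae, hfa⟩ := lr12 a ha
    obtain ⟨heb, hbf, hbe, hfb⟩ := lr12 b hb
    have hab : a * b = 0 := by rw [← heb, ← mul_assoc, hae, zero_mul]
    have key : op a b = op e a * op b f := by
      rw [distl, distr, distr, hef, hab, heb, haf, hx0, h0x, hcomm]
    rw [key, m_ea a ha, m_bf b hb, add_mul, mul_add, mul_add, hef, hab, heb, haf]
    abel
  -- (2,1)
  have c21 : ∀ a b, f*a*e = a → f*b*e = b → op a b = a + b := by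
    intro a b ha hb
    obtain ⟨hfa, hae, haf, hea⟩ := lr21 a ha
    obtain ⟨hfb, hbe, hbf, heb⟩ := lr21 b hb
    have hab : a * b = 0 := by rw [← hfb, ← mul_assoc, haf, zero_mul]
    have key : op a b = op f a * op e b := by
      rw [distl, distr, distr, hfe, hab, hfb, hae, hx0, h0x]
    rw [key, m_fa a ha, m_eb b hb, add_mul, mul_add, mul_add, hfe, hab, hfb, hae]
    abel
  -- (1,1)
  have c11 : ∀ a b, e*a*e = a → e*b*e = b → op a b = a + b := by
    intro a b ha hb
    obtain ⟨hea, hae⟩ := lr11 a ha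
    obtain ⟨heb, hbe⟩ := lr11 b hb
    set t : Matrix (Fin n) (Fin n) A := Matrix.single i0 i1 1 with ht_def
    have hte : t * e = 0 := by
      rw [ht_def, he_def]; exact Matrix.single_mul_single_of_ne (h := hne) ..
    have htf : t * f = t := by rw [hf_def, mul_sub, mul_one, hte, sub_zero]
    have hat : e*(a*t)*f = a*t := by
      rw [← mul_assoc, hea, mul_assoc, htf]
    have hbt : e*(b*t)*f = b*t := by
      rw [← mul_assoc, heb, mul_assoc, htf]
    have key : op a b * t = (a + b) * t := by
      rw [distr, c12 _ _ hat hbt, add_mul]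
    have hu : e * op a b * e = op a b := by
      rw [distl, distr, ha, hb]
    have hab2 : e * (a + b) * e = a + b := by
      rw [mul_add, add_mul, ha, hb]
    obtain ⟨d, hd_def⟩ : ∃ d : Matrix (Fin n) (Fin n) A, d = op a b - (a + b) := ⟨_, rfl⟩
    have hd1 : e * d * e = d := by
      rw [hd_def, mul_sub, sub_mul, hu, hab2]
    have hd1' : e * (d * e) = d := by rw [← mul_assoc]; exact hd1
    have hd2 : d * t = 0 := by rw [hd_def, sub_mul, key, sub_self]
    have hc : d i0 i0 = 0 := by
      have h2 := congrFun (congrFun hd2 i0) i1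
      rw [ht_def] at h2
      simpa using h2
    have hd0 : d = 0 := by
      ext i j
      simp only [Matrix.zero_apply]
      by_cases hj : j = i0
      · by_cases hi : i = i0
        · rw [hi, hj]; exact hc
        · have h3 := congrFun (congrFun hd1' i) j
          rw [he_def] at h3
          rw [← h3]
          simp [hi]
      · have h3 := congrFun (congrFun hd1 i) j
        rw [he_def] at h3
        rw [← h3]
        simp [hj]
    rw [hd_def] at hd0
    exact sub_eq_zero.mp hd0
  -- (2,2)
  have c22 : ∀ a b, f*a*f = a → f*b*f = b → op a b = a + b := by
    intro a b ha hb
    obtain ⟨hfa, haf, hea, hae⟩ := lr22 a ha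
    obtain ⟨hfb, hbf, heb, hbe⟩ := lr22 b hb
    have hu : f * op a b * f = op a b := by
      rw [distl, distr, ha, hb]
    have hab2 : f * (a + b) * f = a + b := by
      rw [mul_add, add_mul, ha, hb]
    obtain ⟨d, hd_def⟩ : ∃ d : Matrix (Fin n) (Fin n) A, d = op a b - (a + b) := ⟨_, rfl⟩
    have hfd : f * d * f = d := by
      rw [hd_def, mul_sub, sub_mul, hu, hab2]
    have hed : e * d = 0 := by
      rw [← hfd, ← mul_assoc, hef', zero_mul]
    have htd : ∀ k : Fin n, k ≠ i0 → Matrix.single i0 k 1 * d = 0 := by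
      intro k hk
      set t : Matrix (Fin n) (Fin n) A := Matrix.single i0 k 1 with ht_def
      have het : e * t = t := by rw [he_def, ht_def]; simp
      have hta : e*(t*a)*f = t*a := by
        rw [← mul_assoc, het, mul_assoc, haf]
      have htb : e*(t*b)*f = t*b := by
        rw [← mul_assoc, het, mul_assoc, hbf]
      have key : t * op a b = t * (a + b) := by
        rw [distl, c12 _ _ hta htb, mul_add]
      rw [hd_def, mul_sub, key, sub_self]
    have hd0 : d = 0 := by
      ext i j
      simp only [Matrix.zero_apply]
      by_cases hi : i = i0
      · have h2 := congrFun (congrFun hed i0) j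
        rw [he_def] at h2
        rw [hi]
        simpa using h2
      · have h2 := congrFun (congrFun (htd i hi) i0) j
        simpa using h2
    rw [hd_def] at hd0
    exact sub_eq_zero.mp hd0
  have main : ∀ x y, op x y = x + y := by
    intro x y
    have p11 : ∀ z, e*(e*z*e)*e = e*z*e := fun z => by
      simp only [mul_assoc, hee, hee']
    have p12 : ∀ z, e*(e*z*f)*f = e*z*f := fun z => by
      simp only [mul_assoc, hee', hff]
    have p21 : ∀ z, f*(f*z*e)*e = f*z*e := fun z => by
      simp only [mul_assoc, hff', hee]
    have p22 : ∀ z, f*(f*z*f)*f = f*z*f := fun z => by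
      simp only [mul_assoc, hff', hff]
    rw [hC x y, c11 _ _ (p11 x) (p11 y), c12 _ _ (p12 x) (p12 y),
      c21 _ _ (p21 x) (p21 y), c22 _ _ (p22 x) (p22 y)]
    conv_rhs => rw [← hM x, ← hM y]
    abel
  intro x y
  rw [← hop, main]
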